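/- Let A be a general metric space, N : A → [0,∞] a right module (i.e. N(y) ≤ d(x,y) + N(x) for all x,y), and F a proper filter on A. Then ⨆_{f∈F} ⨅_{y∈f} N(y) ≤ ⨅_{x∈A} (M⁻(F)(x) + N(x)), where M⁻(F)(x) = ⨆_{f∈F} ⨅_{y∈f} d(x,y). Moreover, if F is weakly flat, this inequality is an equality. -/

import Mathlib

open ENNReal

open Filter

theorem colim_right_module (A : Type*) (d : A → A → ℝ≥0∞)
    (htri : ∀ x y z, d x z ≤ d x y + d y z) (hrefl : ∀ x, d x x = 0)
    (N : A → ℝ≥0∞) (hN : ∀ x y, N y ≤ d x y + N x)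
    (F : Filter A) [F.NeBot] :
    (⨆ f ∈ F, ⨅ y ∈ f, N y) ≤ (⨅ x, (⨆ f ∈ F, ⨅ y ∈ f, d x y) + N x) ∧
    ((⨅ f ∈ F, ⨆ x ∈ f, ⨆ g ∈ F, ⨅ y ∈ g, d x y) = 0 →
      (⨆ f ∈ F, ⨅ y ∈ f, N y) = (⨅ x, (⨆ f ∈ F, ⨅ y ∈ f, d x y) + N x)) := by
  have hle : (⨆ f ∈ F, ⨅ y ∈ f, N y) ≤ (⨅ x, (⨆ f ∈ F, ⨅ y ∈ f, d x y) + N x) := by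
    refine le_iInf fun x => iSup₂_le fun f hf => ?_
    obtain ⟨y0, hy0⟩ := Filter.nonempty_of_mem hf
    have h1 : (⨅ y ∈ f, N y) ≤ ⨅ y ∈ f, (d x y + N x) :=
      iInf₂_mono fun y hy => hN x y
    have h2 : (⨅ y ∈ f, (d x y + N x)) = (⨅ y ∈ f, d x y) + N x := by
      have : Nonempty {y // y ∈ f} := ⟨⟨y0, hy0⟩⟩
      rw [iInf_subtype', iInf_subtype', ENNReal.iInf_add]
    calc (⨅ y ∈ f, N y) ≤ (⨅ y ∈ f, d x y) + N x := by rw [← h2]; exact h1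
      _ ≤ (⨆ f ∈ F, ⨅ y ∈ f, d x y) + N x :=
        add_le_add_left (le_iSup₂ (f := fun f _ => ⨅ y ∈ f, d x y) f hf) _
  refine ⟨hle, fun h0 => le_antisymm hle ?_⟩
  set L := ⨆ f ∈ F, ⨅ y ∈ f, N y with hL
  refine ENNReal.le_of_forall_pos_le_add fun ε hε hLlt => ?_
  have hε2 : (0 : ℝ≥0∞) < (ε : ℝ≥0∞) / 2 :=
    ENNReal.half_pos (by exact_mod_cast hε.ne')
  have h0' : (⨅ f ∈ F, ⨆ x ∈ f, ⨆ g ∈ F, ⨅ y ∈ g, d x y) < (ε : ℝ≥0∞) / 2 := by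
    rw [h0]; exact_mod_cast hε2
  obtain ⟨f, hf'⟩ := iInf_lt_iff.mp h0'
  obtain ⟨hf, hfε⟩ := iInf_lt_iff.mp hf'
  have hNf : (⨅ y ∈ f, N y) ≤ L := le_iSup₂ (f := fun f _ => ⨅ y ∈ f, N y) f hf
  have hNlt : (⨅ y ∈ f, N y) < ⊤ := lt_of_le_of_lt hNf hLlt
  have hlt : (⨅ y ∈ f, N y) < (⨅ y ∈ f, N y) + (ε : ℝ≥0∞) / 2 :=
    ENNReal.lt_add_right hNlt.ne (by exact_mod_cast hε2.ne')
  obtain ⟨x, hx'⟩ := iInf_lt_iff.mp hlt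
  obtain ⟨hx, hxN⟩ := iInf_lt_iff.mp hx'
  have hMx : (⨆ g ∈ F, ⨅ y ∈ g, d x y) ≤ (ε : ℝ≥0∞) / 2 :=
    le_of_lt (lt_of_le_of_lt (le_iSup₂ (f := fun x _ => ⨆ g ∈ F, ⨅ y ∈ g, d x y) x hx) hfε)
  calc (⨅ x, (⨆ f ∈ F, ⨅ y ∈ f, d x y) + N x) ≤ (⨆ g ∈ F, ⨅ y ∈ g, d x y) + N x :=
        iInf_le _ x
    _ ≤ (ε : ℝ≥0∞) / 2 + ((⨅ y ∈ f, N y) + (ε : ℝ≥0∞) / 2) := add_le_add hMx hxN.le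
    _ ≤ (ε : ℝ≥0∞) / 2 + (L + (ε : ℝ≥0∞) / 2) := by gcongr
    _ = L + ε := by rw [← add_assoc, add_comm ((ε:ℝ≥0∞)/2) L, add_assoc,
        ENNReal.add_halves]
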